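/- Sector containment around an extremal point (claim from the proof of Lemma 1): let S ⊆ ℤ be finite and nonempty, c : S → ℝ, P = convexHull{(c(l), l) : l ∈ S} + {(t, 0) : t ≥ 0} ⊆ ℝ², y : ℤ → ℝ, Y = {(−y(l), l) : l ∈ ℤ}, and for i ∈ ℤ let a_i be the minimal real such that P_i := P + (a_i, i) lies above Y. Suppose (u, l) ∈ P_i ∩ Y with l ∈ ℤ. Then every point (v, w) ∈ P_i satisfies: if w ≤ l then v ≥ u − (a_{i+1} − a_i)·(l − w), and if w ≥ l then v ≥ u − (a_{i−1} − a_i)·(w − l). -/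

import Mathlib

open Pointwise

/-- The extended Newton polygon: convex hull of the points `(c l, l)`, `l ∈ S`,
plus the ray `{(t, 0) : t ≥ 0}`. -/
def NewtonPolygon (S : Finset ℤ) (c : ℤ → ℝ) : Set (ℝ × ℝ) :=
  convexHull ℝ {p | ∃ l ∈ S, p = (c l, (l : ℝ))} + {q | ∃ t : ℝ, 0 ≤ t ∧ q = (t, 0)}

/-- The translate `P + (a, i)` of a subset of `ℝ²`. -/
def shiftSet (P : Set (ℝ × ℝ)) (a : ℝ) (i : ℤ) : Set (ℝ × ℝ) :=
  (fun p => (p.1 + a, p.2 + (i : ℝ))) '' P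

/-- `U` lies above `Y = {(-y l, l) : l ∈ ℤ}` if every point `(v, l) ∈ U` with
integer second coordinate `l` satisfies `v ≥ -y l`. -/
def LiesAbove (y : ℤ → ℝ) (U : Set (ℝ × ℝ)) : Prop :=
  ∀ (v : ℝ) (l : ℤ), (v, (l : ℝ)) ∈ U → -y l ≤ v

/-- The set `Y = {(-y l, l) : l ∈ ℤ} ⊆ ℝ²`. -/
def YSet (y : ℤ → ℝ) : Set (ℝ × ℝ) := {p | ∃ l : ℤ, p = (-y l, (l : ℝ))}

/-- `a` is the minimal real such that `P + (a, i)` lies above `Y`. -/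
def IsMinimalLift (y : ℤ → ℝ) (P : Set (ℝ × ℝ)) (i : ℤ) (a : ℝ) : Prop :=
  LiesAbove y (shiftSet P a i) ∧ ∀ a' < a, ¬ LiesAbove y (shiftSet P a' i)

lemma ray_convex : Convex ℝ {q : ℝ × ℝ | ∃ t : ℝ, 0 ≤ t ∧ q = (t, 0)} := by
  rintro p ⟨tp, htp, rfl⟩ q ⟨tq, htq, rfl⟩ s t hs ht hst
  exact ⟨s * tp + t * tq, by positivity, by simp [Prod.ext_iff]⟩

lemma NP_convex (S : Finset ℤ) (c : ℤ → ℝ) : Convex ℝ (NewtonPolygon S c) :=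
  (convex_convexHull ℝ _).add ray_convex

lemma hull_subset_NP (S : Finset ℤ) (c : ℤ → ℝ) :
    convexHull ℝ {p : ℝ × ℝ | ∃ l ∈ S, p = (c l, (l : ℝ))} ⊆ NewtonPolygon S c := by
  intro q hq
  exact ⟨q, hq, (0, 0), ⟨0, le_refl 0, rfl⟩, add_zero q⟩

lemma Vset_eq (S : Finset ℤ) (c : ℤ → ℝ) :
    {p : ℝ × ℝ | ∃ l ∈ S, p = (c l, (l : ℝ))}
      = ↑(S.image fun m => (c m, (m : ℝ))) := by
  ext p
  simp [eq_comm]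

lemma lemK (S : Finset ℤ) (c : ℤ → ℝ) (x h : ℝ)
    (hx : (x, h) ∈ NewtonPolygon S c) (n : ℤ) (hn1 : (n : ℝ) < h) (hn2 : h < (n : ℝ) + 1) :
    ∃ x₁ x₂ : ℝ, (x₁, (n : ℝ)) ∈ NewtonPolygon S c ∧ (x₂, (n : ℝ) + 1) ∈ NewtonPolygon S c ∧
      ((n : ℝ) + 1 - h) * x₁ + (h - (n : ℝ)) * x₂ ≤ x := by
  obtain ⟨q, hq, r, hr, hqr⟩ := hx
  obtain ⟨τ, hτ, rfl⟩ := hr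
  have hq1 : q.1 + τ = x := congrArg Prod.fst hqr
  have hq2 : q.2 = h := by
    have := congrArg Prod.snd hqr
    simpa using this
  rw [Vset_eq, Finset.convexHull_eq] at hq
  obtain ⟨w, hw0, hw1, hwc⟩ := hq
  set T := S.image (fun m => (c m, (m : ℝ))) with hT
  rw [Finset.centerMass_eq_of_sum_1 _ id hw1] at hwc
  simp only [id] at hwc
  set T₁ := T.filter (fun y => y.2 ≤ (n : ℝ)) with hT₁
  set T₂ := T.filter (fun y => ¬ y.2 ≤ (n : ℝ)) with hT₂
  have hT2ge : ∀ y ∈ T₂, (n : ℝ) + 1 ≤ y.2 := by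
    intro yy hy
    rcases Finset.mem_filter.mp hy with ⟨hyT, hy2⟩
    obtain ⟨m, hm, rfl⟩ := Finset.mem_image.mp hyT
    push_neg at hy2
    have h' : (n : ℝ) < (m : ℝ) := by simpa using hy2
    have h'' : n + 1 ≤ m := by exact_mod_cast h'
    simpa using (show ((n : ℝ)) + 1 ≤ (m : ℝ) by exact_mod_cast h'')
  have hT1le : ∀ y ∈ T₁, y.2 ≤ (n : ℝ) := fun y hy => (Finset.mem_filter.mp hy).2
  set A := ∑ y ∈ T₁, w y with hA
  set B := ∑ y ∈ T₂, w y with hB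
  have hAB : A + B = 1 := by rw [hA, hB, Finset.sum_filter_add_sum_filter_not]; exact hw1
  have hA0 : 0 ≤ A := Finset.sum_nonneg fun y hy => hw0 y (Finset.mem_filter.mp hy).1
  have hB0 : 0 ≤ B := Finset.sum_nonneg fun y hy => hw0 y (Finset.mem_filter.mp hy).1
  have hsplit : (∑ y ∈ T₁, w y • y) + (∑ y ∈ T₂, w y • y) = q := by
    rw [Finset.sum_filter_add_sum_filter_not]; exact hwc
  have hsnd : ∀ t : Finset (ℝ × ℝ), (∑ y ∈ t, w y • y).2 = ∑ y ∈ t, w y * y.2 := by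
    intro t
    rw [Prod.snd_sum]
    simp [Prod.smul_snd]
  have hfst : ∀ t : Finset (ℝ × ℝ), (∑ y ∈ t, w y • y).1 = ∑ y ∈ t, w y * y.1 := by
    intro t
    rw [Prod.fst_sum]
    simp [Prod.smul_fst]
  have hh : (∑ y ∈ T₁, w y * y.2) + (∑ y ∈ T₂, w y * y.2) = h := by
    rw [← hsnd, ← hsnd, ← Prod.snd_add, hsplit, hq2]
  have hs1le : ∑ y ∈ T₁, w y * y.2 ≤ A * (n : ℝ) := by
    rw [hA, Finset.sum_mul]
    exact Finset.sum_le_sum fun y hy =>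
      mul_le_mul_of_nonneg_left (hT1le y hy) (hw0 y (Finset.mem_filter.mp hy).1)
  have hs2ge : B * ((n : ℝ) + 1) ≤ ∑ y ∈ T₂, w y * y.2 := by
    rw [hB, Finset.sum_mul]
    exact Finset.sum_le_sum fun y hy =>
      mul_le_mul_of_nonneg_left (hT2ge y hy) (hw0 y (Finset.mem_filter.mp hy).1)
  have hApos : 0 < A := by
    rcases hA0.lt_or_eq with h'|h'
    · exact h'
    · exfalso
      have hz : ∀ y ∈ T₁, w y = 0 := by
        intro y hy
        exact (Finset.sum_eq_zero_iff_of_nonneg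
          (fun y hy => hw0 y (Finset.mem_filter.mp hy).1)).mp h'.symm y hy
      have h1z : ∑ y ∈ T₁, w y * y.2 = 0 :=
        Finset.sum_eq_zero fun y hy => by rw [hz y hy, zero_mul]
      have hB1 : B = 1 := by linarith
      rw [hB1, one_mul] at hs2ge
      linarith
  have hBpos : 0 < B := by
    rcases hB0.lt_or_eq with h'|h'
    · exact h'
    · exfalso
      have hz : ∀ y ∈ T₂, w y = 0 := by
        intro y hy
        exact (Finset.sum_eq_zero_iff_of_nonneg
          (fun y hy => hw0 y (Finset.mem_filter.mp hy).1)).mp h'.symm y hy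
      have h2z : ∑ y ∈ T₂, w y * y.2 = 0 :=
        Finset.sum_eq_zero fun y hy => by rw [hz y hy, zero_mul]
      have hA1 : A = 1 := by linarith
      rw [hA1, one_mul] at hs1le
      linarith
  set q₁ := T₁.centerMass w id with hq₁def
  set q₂ := T₂.centerMass w id with hq₂def
  have hmem₁ : q₁ ∈ convexHull ℝ (↑T : Set (ℝ × ℝ)) :=
    T₁.centerMass_mem_convexHull (fun y hy => hw0 y (Finset.mem_filter.mp hy).1)
      (by rw [← hA]; exact hApos) (fun y hy => Finset.mem_coe.mpr (Finset.mem_filter.mp hy).1)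
  have hmem₂ : q₂ ∈ convexHull ℝ (↑T : Set (ℝ × ℝ)) :=
    T₂.centerMass_mem_convexHull (fun y hy => hw0 y (Finset.mem_filter.mp hy).1)
      (by rw [← hB]; exact hBpos) (fun y hy => Finset.mem_coe.mpr (Finset.mem_filter.mp hy).1)
  have hs₁eq : ∑ y ∈ T₁, w y • y = A • q₁ := by
    rw [hq₁def, Finset.centerMass, ← hA, smul_smul, mul_inv_cancel₀ hApos.ne', one_smul]
    simp only [id_eq]
  have hs₂eq : ∑ y ∈ T₂, w y • y = B • q₂ := by
    rw [hq₂def, Finset.centerMass, ← hB, smul_smul, mul_inv_cancel₀ hBpos.ne', one_smul]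
    simp only [id_eq]
  have hq1comb : A * q₁.1 + B * q₂.1 = q.1 := by
    have := congrArg Prod.fst hsplit
    rw [Prod.fst_add, hs₁eq, hs₂eq] at this
    simpa using this
  have hhcomb : A * q₁.2 + B * q₂.2 = h := by
    have := congrArg Prod.snd hsplit
    rw [Prod.snd_add, hs₁eq, hs₂eq] at this
    simpa [hq2] using this
  have hq12 : q₁.2 ≤ (n : ℝ) := by
    have h1 : (A • q₁).2 = ∑ y ∈ T₁, w y * y.2 := by rw [← hs₁eq]; exact hsnd T₁
    have h2 : A * q₁.2 ≤ A * (n : ℝ) := by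
      rw [Prod.smul_snd, smul_eq_mul] at h1
      rw [h1]; exact hs1le
    exact le_of_mul_le_mul_left h2 hApos
  have hq22 : (n : ℝ) + 1 ≤ q₂.2 := by
    have h1 : (B • q₂).2 = ∑ y ∈ T₂, w y * y.2 := by rw [← hs₂eq]; exact hsnd T₂
    have h2 : B * ((n : ℝ) + 1) ≤ B * q₂.2 := by
      rw [Prod.smul_snd, smul_eq_mul] at h1
      rw [h1]; exact hs2ge
    exact le_of_mul_le_mul_left h2 hBpos
  -- now build the two interpolated points
  set s := q₁.2 with hsdef
  set tt := q₂.2 with httdef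
  have hst : 0 < tt - s := by linarith
  set θ₁ : ℝ := (tt - (n : ℝ)) / (tt - s) with hθ₁
  set θ₂ : ℝ := (tt - ((n : ℝ) + 1)) / (tt - s) with hθ₂
  have hθ₁0 : 0 ≤ θ₁ := div_nonneg (by linarith) hst.le
  have hθ₁1 : θ₁ ≤ 1 := (div_le_one hst).mpr (by linarith)
  have hθ₂0 : 0 ≤ θ₂ := div_nonneg (by linarith) hst.le
  have hθ₂1 : θ₂ ≤ 1 := (div_le_one hst).mpr (by linarith)
  have hr₁ : θ₁ • q₁ + (1 - θ₁) • q₂ ∈ convexHull ℝ (↑T : Set (ℝ × ℝ)) :=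
    (convex_convexHull ℝ _) hmem₁ hmem₂ hθ₁0 (by linarith) (by ring)
  have hr₂ : θ₂ • q₁ + (1 - θ₂) • q₂ ∈ convexHull ℝ (↑T : Set (ℝ × ℝ)) :=
    (convex_convexHull ℝ _) hmem₁ hmem₂ hθ₂0 (by linarith) (by ring)
  refine ⟨θ₁ * q₁.1 + (1 - θ₁) * q₂.1, θ₂ * q₁.1 + (1 - θ₂) * q₂.1, ?_, ?_, ?_⟩
  · apply hull_subset_NP
    rw [Vset_eq]
    convert hr₁ using 1
    have h2 : θ₁ * s + (1 - θ₁) * tt = (n : ℝ) := by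
      rw [hθ₁]; field_simp; ring
    exact Prod.ext (by simp [Prod.smul_fst]) (by simp [Prod.smul_snd, ← h2]; rfl)
  · apply hull_subset_NP
    rw [Vset_eq]
    convert hr₂ using 1
    have h2 : θ₂ * s + (1 - θ₂) * tt = (n : ℝ) + 1 := by
      rw [hθ₂]; field_simp; ring
    exact Prod.ext (by simp [Prod.smul_fst]) (by simp [Prod.smul_snd, ← h2]; rfl)
  · have hBval : B = 1 - A := by linarith
    have hhval : h = A * s + (1 - A) * tt := by rw [← hhcomb, hBval]
    have key : ((n : ℝ) + 1 - h) * (θ₁ * q₁.1 + (1 - θ₁) * q₂.1)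
        + (h - (n : ℝ)) * (θ₂ * q₁.1 + (1 - θ₂) * q₂.1) = q.1 := by
      rw [← hq1comb, hBval, hhval, hθ₁, hθ₂]
      field_simp
      ring
    linarith [key, hτ, hq1]

lemma helperDown (Q : Set (ℝ × ℝ)) (hQ : Convex ℝ Q) (U L d : ℝ)
    (hK : ∀ x h : ℝ, (x, h) ∈ Q → L - 1 < h → h < L → ∃ x₁ x₂ : ℝ,
      (x₁, L - 1) ∈ Q ∧ (x₂, L) ∈ Q ∧ (L - h) * x₁ + (h - (L - 1)) * x₂ ≤ x)
    (hL : ∀ x : ℝ, (x, L) ∈ Q → U ≤ x)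
    (hL1 : ∀ x : ℝ, (x, L - 1) ∈ Q → U - d ≤ x)
    (hq : (U, L) ∈ Q) :
    ∀ x h : ℝ, (x, h) ∈ Q → h ≤ L → U - d * (L - h) ≤ x := by
  intro x h hx hhL
  rcases eq_or_lt_of_le hhL with heq | hlt
  · subst heq
    simpa using hL x hx
  rcases le_or_gt h (L - 1) with hle | hgt
  · have hLh : (0 : ℝ) < L - h := by linarith
    set t : ℝ := 1 / (L - h) with htdef
    have ht0 : 0 ≤ t := by positivity
    have ht1 : t ≤ 1 := by rw [htdef, div_le_one hLh]; linarith
    have hmem : t • ((x, h) : ℝ × ℝ) + (1 - t) • ((U, L) : ℝ × ℝ) ∈ Q :=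
      hQ hx hq ht0 (by linarith) (by ring)
    have htEq : t * (L - h) = 1 := by rw [htdef]; exact one_div_mul_cancel hLh.ne'
    have hcoord : (t • ((x, h) : ℝ × ℝ) + (1 - t) • ((U, L) : ℝ × ℝ))
        = (t * x + (1 - t) * U, L - 1) := by
      have h2 : t * h + (1 - t) * L = L - 1 := by nlinarith [htEq]
      apply Prod.ext_iff.mpr
      refine ⟨by simp, ?_⟩
      simpa using h2
    rw [hcoord] at hmem
    have hb := hL1 _ hmem
    have h3 : (U - d) * (L - h) ≤ (t * x + (1 - t) * U) * (L - h) :=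
      mul_le_mul_of_nonneg_right hb hLh.le
    have h4 : (t * x + (1 - t) * U) * (L - h)
        = x * (t * (L - h)) + U * (L - h) - U * (t * (L - h)) := by ring
    rw [h4, htEq] at h3
    nlinarith [h3]
  · obtain ⟨x₁, x₂, m₁, m₂, hin⟩ := hK x h hx hgt hlt
    have b₁ := hL1 x₁ m₁
    have b₂ := hL x₂ m₂
    nlinarith [mul_le_mul_of_nonneg_left b₁ (show (0:ℝ) ≤ L - h by linarith),
      mul_le_mul_of_nonneg_left b₂ (show (0:ℝ) ≤ h - (L - 1) by linarith), hin]

lemma helperUp (Q : Set (ℝ × ℝ)) (hQ : Convex ℝ Q) (U L d : ℝ)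
    (hK : ∀ x h : ℝ, (x, h) ∈ Q → L < h → h < L + 1 → ∃ x₁ x₂ : ℝ,
      (x₁, L) ∈ Q ∧ (x₂, L + 1) ∈ Q ∧ (L + 1 - h) * x₁ + (h - L) * x₂ ≤ x)
    (hL : ∀ x : ℝ, (x, L) ∈ Q → U ≤ x)
    (hL1 : ∀ x : ℝ, (x, L + 1) ∈ Q → U - d ≤ x)
    (hq : (U, L) ∈ Q) :
    ∀ x h : ℝ, (x, h) ∈ Q → L ≤ h → U - d * (h - L) ≤ x := by
  intro x h hx hhL
  rcases eq_or_lt_of_le hhL with heq | hlt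
  · rw [← heq]
    simpa using hL x (by rwa [← heq] at hx)
  rcases le_or_gt (L + 1) h with hle | hgt
  · have hLh : (0 : ℝ) < h - L := by linarith
    set t : ℝ := 1 / (h - L) with htdef
    have ht0 : 0 ≤ t := by positivity
    have ht1 : t ≤ 1 := by rw [htdef, div_le_one hLh]; linarith
    have hmem : t • ((x, h) : ℝ × ℝ) + (1 - t) • ((U, L) : ℝ × ℝ) ∈ Q :=
      hQ hx hq ht0 (by linarith) (by ring)
    have htEq : t * (h - L) = 1 := by rw [htdef]; exact one_div_mul_cancel hLh.ne'
    have hcoord : (t • ((x, h) : ℝ × ℝ) + (1 - t) • ((U, L) : ℝ × ℝ))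
        = (t * x + (1 - t) * U, L + 1) := by
      have h2 : t * h + (1 - t) * L = L + 1 := by nlinarith [htEq]
      apply Prod.ext_iff.mpr
      refine ⟨by simp, ?_⟩
      simpa using h2
    rw [hcoord] at hmem
    have hb := hL1 _ hmem
    have h3 : (U - d) * (h - L) ≤ (t * x + (1 - t) * U) * (h - L) :=
      mul_le_mul_of_nonneg_right hb hLh.le
    have h4 : (t * x + (1 - t) * U) * (h - L)
        = x * (t * (h - L)) + U * (h - L) - U * (t * (h - L)) := by ring
    rw [h4, htEq] at h3
    nlinarith [h3]
  · obtain ⟨x₁, x₂, m₁, m₂, hin⟩ := hK x h hx hlt hgt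
    have b₁ := hL x₁ m₁
    have b₂ := hL1 x₂ m₂
    nlinarith [mul_le_mul_of_nonneg_left b₁ (show (0:ℝ) ≤ L + 1 - h by linarith),
      mul_le_mul_of_nonneg_left b₂ (show (0:ℝ) ≤ h - L by linarith), hin]


/-- Sector containment around an extremal point (claim from the proof of
Lemma 1): if `(u, l) ∈ P_i ∩ Y`, then every point `(v, w) ∈ P_i` with `w ≤ l`
satisfies `v ≥ u - (a (i+1) - a i)·(l - w)`, and every point `(v, w) ∈ P_i` with
`w ≥ l` satisfies `v ≥ u - (a (i-1) - a i)·(w - l)`. -/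
theorem sector_containment
    (S : Finset ℤ) (hS : S.Nonempty) (c : ℤ → ℝ) (y : ℤ → ℝ) (a : ℤ → ℝ)
    (ha : ∀ i : ℤ, IsMinimalLift y (NewtonPolygon S c) i (a i))
    (i : ℤ) (u : ℝ) (l : ℤ)
    (hu : (u, (l : ℝ)) ∈ shiftSet (NewtonPolygon S c) (a i) i ∩ YSet y) :
    ∀ v w : ℝ, (v, w) ∈ shiftSet (NewtonPolygon S c) (a i) i →
      (w ≤ (l : ℝ) → u - (a (i + 1) - a i) * ((l : ℝ) - w) ≤ v) ∧
      ((l : ℝ) ≤ w → u - (a (i - 1) - a i) * (w - (l : ℝ)) ≤ v) := by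
  obtain ⟨hu1, l', hl'⟩ := hu
  have huy : u = -y l := by
    have h1 : u = -y l' := congrArg Prod.fst hl'
    have h2 : ((l : ℝ)) = (l' : ℝ) := congrArg Prod.snd hl'
    have h3 : l = l' := by exact_mod_cast h2
    rw [h3]; exact h1
  obtain ⟨p, hp, hpe⟩ := hu1
  obtain ⟨p1, p2⟩ := p
  simp only [Prod.mk.injEq] at hpe
  obtain ⟨hp1, hp2⟩ := hpe
  have hpmem : ((u - a i, (l : ℝ) - (i : ℝ)) : ℝ × ℝ) ∈ NewtonPolygon S c := by
    have hpp : ((p1, p2) : ℝ × ℝ) = (u - a i, (l : ℝ) - (i : ℝ)) := by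
      rw [Prod.mk.injEq]; constructor <;> linarith
    rwa [hpp] at hp
  have sliceAt : ∀ j : ℤ, ∀ x : ℝ, (x, (l : ℝ) - (j : ℝ)) ∈ NewtonPolygon S c →
      -y l - a j ≤ x := by
    intro j x hx
    have hmem : ((x + a j, (l : ℝ)) : ℝ × ℝ) ∈ shiftSet (NewtonPolygon S c) (a j) j := by
      refine ⟨(x, (l : ℝ) - (j : ℝ)), hx, ?_⟩
      simp only [Prod.mk.injEq]
      refine ⟨by simp, by simp⟩
    have := (ha j).1 (x + a j) l hmem
    linarith
  intro v w hvw
  obtain ⟨p', hp', hpe'⟩ := hvw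
  obtain ⟨p1', p2'⟩ := p'
  simp only [Prod.mk.injEq] at hpe'
  obtain ⟨hp1', hp2'⟩ := hpe'
  have hvwmem : ((v - a i, w - (i : ℝ)) : ℝ × ℝ) ∈ NewtonPolygon S c := by
    have hpp : ((p1', p2') : ℝ × ℝ) = (v - a i, w - (i : ℝ)) := by
      rw [Prod.mk.injEq]; constructor <;> linarith
    rwa [hpp] at hp'
  have hLmem : ∀ x : ℝ, (x, (l : ℝ) - (i : ℝ)) ∈ NewtonPolygon S c → u - a i ≤ x := by
    intro x hx
    have := sliceAt i x hx
    linarith [huy]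
  constructor
  · intro hwl
    have hKd : ∀ x h : ℝ, (x, h) ∈ NewtonPolygon S c → ((l : ℝ) - (i : ℝ)) - 1 < h →
        h < (l : ℝ) - (i : ℝ) → ∃ x₁ x₂ : ℝ,
        (x₁, ((l : ℝ) - (i : ℝ)) - 1) ∈ NewtonPolygon S c ∧
        (x₂, (l : ℝ) - (i : ℝ)) ∈ NewtonPolygon S c ∧
        (((l : ℝ) - (i : ℝ)) - h) * x₁ + (h - (((l : ℝ) - (i : ℝ)) - 1)) * x₂ ≤ x := by
      intro x h hx h1 h2
      obtain ⟨x₁, x₂, m₁, m₂, hin⟩ := lemK S c x h hx (l - i - 1)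
        (by push_cast; linarith) (by push_cast; linarith)
      have e1 : ((l - i - 1 : ℤ) : ℝ) = ((l : ℝ) - (i : ℝ)) - 1 := by push_cast; ring
      have e2 : ((l - i - 1 : ℤ) : ℝ) + 1 = (l : ℝ) - (i : ℝ) := by push_cast; ring
      rw [e1] at m₁ hin
      rw [e1] at m₂
      refine ⟨x₁, x₂, m₁, by rw [show ((l:ℝ) - (i:ℝ)) - 1 + 1 = (l:ℝ) - (i:ℝ) by ring] at m₂; exact m₂, ?_⟩
      linarith [hin]
    have hL1d : ∀ x : ℝ, (x, ((l : ℝ) - (i : ℝ)) - 1) ∈ NewtonPolygon S c →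
        (u - a i) - (a (i + 1) - a i) ≤ x := by
      intro x hx
      have e : ((l : ℝ) - (i : ℝ)) - 1 = (l : ℝ) - ((i + 1 : ℤ) : ℝ) := by push_cast; ring
      rw [e] at hx
      have := sliceAt (i + 1) x hx
      linarith [huy]
    have down := helperDown (NewtonPolygon S c) (NP_convex S c) (u - a i)
      ((l : ℝ) - (i : ℝ)) (a (i + 1) - a i) hKd hLmem hL1d hpmem
      (v - a i) (w - (i : ℝ)) hvwmem (by linarith)
    have e : ((l : ℝ) - (i : ℝ)) - (w - (i : ℝ)) = (l : ℝ) - w := by ring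
    rw [e] at down
    linarith
  · intro hwl
    have hKu : ∀ x h : ℝ, (x, h) ∈ NewtonPolygon S c → (l : ℝ) - (i : ℝ) < h →
        h < ((l : ℝ) - (i : ℝ)) + 1 → ∃ x₁ x₂ : ℝ,
        (x₁, (l : ℝ) - (i : ℝ)) ∈ NewtonPolygon S c ∧
        (x₂, ((l : ℝ) - (i : ℝ)) + 1) ∈ NewtonPolygon S c ∧
        (((l : ℝ) - (i : ℝ)) + 1 - h) * x₁ + (h - ((l : ℝ) - (i : ℝ))) * x₂ ≤ x := by
      intro x h hx h1 h2
      obtain ⟨x₁, x₂, m₁, m₂, hin⟩ := lemK S c x h hx (l - i)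
        (by push_cast; linarith) (by push_cast; linarith)
      have e1 : ((l - i : ℤ) : ℝ) = (l : ℝ) - (i : ℝ) := by push_cast; ring
      rw [e1] at m₁ m₂ hin
      exact ⟨x₁, x₂, m₁, m₂, by linarith [hin]⟩
    have hL1u : ∀ x : ℝ, (x, ((l : ℝ) - (i : ℝ)) + 1) ∈ NewtonPolygon S c →
        (u - a i) - (a (i - 1) - a i) ≤ x := by
      intro x hx
      have e : ((l : ℝ) - (i : ℝ)) + 1 = (l : ℝ) - ((i - 1 : ℤ) : ℝ) := by push_cast; ring
      rw [e] at hx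
      have := sliceAt (i - 1) x hx
      linarith [huy]
    have up := helperUp (NewtonPolygon S c) (NP_convex S c) (u - a i)
      ((l : ℝ) - (i : ℝ)) (a (i - 1) - a i) hKu hLmem hL1u hpmem
      (v - a i) (w - (i : ℝ)) hvwmem (by linarith)
    have e : (w - (i : ℝ)) - ((l : ℝ) - (i : ℝ)) = w - (l : ℝ) := by ring
    rw [e] at up
    linarith
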